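/- Let P ⊆ ℕ be ultimately periodic. Then for every finite deterministic parity automaton A over the alphabet {0,1} × {0,1} × {0,1} defining the relation R_A on triples of ω-sequences, either there is a finite-state causal operator F : (ℕ → Bool) × (ℕ → Bool) → (ℕ → Bool) such that (X, F(X, χ_P), χ_P) ∈ R_A for every X, or there is a finite-state strongly causal operator G : (ℕ → Bool) × (ℕ → Bool) → (ℕ → Bool) such that (G(Y, χ_P), Y, χ_P) ∉ R_A for every Y. -/

import Mathlib

open Classical in
/-- The characteristic ω-sequence of a set of natural numbers. -/
noncomputable def chi (P : Set ℕ) : ℕ → Bool := fun n => decide (n ∈ P)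

/-- A causal operator is *finite state* if it is computed by a Moore automaton
with a finite state set. -/
def FiniteStateCausal {α β : Type} (F : (ℕ → α) → (ℕ → β)) : Prop :=
  ∃ (Q : Type) (_ : Fintype Q) (δ : Q → α → Q) (q₀ : Q) (out : Q → α → β),
    ∀ (x : ℕ → α) (n : ℕ),
      F x n = out (((List.range n).map x).foldl δ q₀) (x n)

/-- A strongly causal operator is *finite state* if it is computed by a Mealey
automaton with a finite state set. -/
def FiniteStateStronglyCausal {α β : Type} (F : (ℕ → α) → (ℕ → β)) : Prop :=
  ∃ (Q : Type) (_ : Fintype Q) (δ : Q → α → Q) (q₀ : Q) (out : Q → β),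
    ∀ (x : ℕ → α) (n : ℕ),
      F x n = out (((List.range n).map x).foldl δ q₀)

/-- A two-argument operator `H(X, Z)` identified with an operator on
ω-sequences over the product alphabet `Bool × Bool`. -/
def PairOp (H : (ℕ → Bool) → (ℕ → Bool) → (ℕ → Bool)) :
    (ℕ → Bool × Bool) → (ℕ → Bool) :=
  fun z => H (fun n => (z n).1) (fun n => (z n).2)

/-- Acceptance by a deterministic parity automaton `(Q, δ, q₀, col)`: the
minimal color of a state visited infinitely often along the run on the
ω-word `a` is even. -/
def ParityAccepts {Q σ : Type*} (δ : Q → σ → Q) (q₀ : Q) (col : Q → ℕ)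
    (a : ℕ → σ) : Prop :=
  Even (sInf {k | ∃ q, {n | ((List.range (n + 1)).map a).foldl δ q₀ = q}.Infinite ∧
    col q = k})



set_option linter.unusedSectionVars false


open Classical

section Helpers

/-- shift lemma for infinite sets of naturals -/
lemma infinite_shift (q : ℕ → Prop) (t : ℕ) :
    {n | q (n + t)}.Infinite ↔ {n | q n}.Infinite := by
  constructor
  · intro h
    have h2 : ((· + t) '' {n | q (n + t)}).Infinite :=
      h.image (Set.injOn_of_injective (add_left_injective t))
    refine h2.mono ?_
    rintro m ⟨n, hn, rfl⟩; exact hn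
  · intro h
    have hsub : {n | q n} ⊆ ((· + t) '' {n | q (n + t)}) ∪ ↑(Finset.range t) := by
      intro n hn
      rcases lt_or_ge n t with h1 | h1
      · exact Or.inr (by simpa using h1)
      · exact Or.inl ⟨n - t, by simpa [Nat.sub_add_cancel h1] using hn, Nat.sub_add_cancel h1⟩
    have := h.mono hsub
    rcases Set.infinite_union.mp (by exact this) with h2 | h2
    · exact h2.of_image _
    · exact absurd (Finset.finite_toSet _) h2
  
end Helpers
open Classical

section Games
variable {V : Type} [Fintype V]

/-- vertices visited infinitely often -/
def InfOcc (p : ℕ → V) : Set V := {v | {n | p n = v}.Infinite}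

lemma InfOcc_nonempty (p : ℕ → V) : (InfOcc p).Nonempty := by
  have : ∃ v : V, (p ⁻¹' {v}).Infinite := by
    by_contra h
    push_neg at h
    have : (Set.univ : Set ℕ).Finite := by
      have : (⋃ v : V, p ⁻¹' {v}) = Set.univ := by
        ext n; simp
      rw [← this]
      exact Set.finite_iUnion h
    exact Set.infinite_univ this
  obtain ⟨v, hv⟩ := this
  exact ⟨v, by simpa [InfOcc, Set.preimage, Set.singleton] using hv⟩

lemma InfOcc_shift (p : ℕ → V) (t : ℕ) : InfOcc (fun n => p (n + t)) = InfOcc p := by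
  ext v; exact infinite_shift (fun n => p n = v) t

lemma InfOcc_subset {p : ℕ → V} {S : Set V} (h : ∀ n, p n ∈ S) : InfOcc p ⊆ S := by
  intro v hv
  obtain ⟨n, hn⟩ := hv.nonempty
  exact hn ▸ h n

/-- pigeonhole: if p hits a set infinitely often, some element is hit infinitely often -/
lemma InfOcc_of_infinite_visits {p : ℕ → V} {S : Set V}
    (h : {n | p n ∈ S}.Infinite) : ∃ v ∈ S, v ∈ InfOcc p := by
  by_contra hc
  push_neg at hc
  have : {n | p n ∈ S} ⊆ ⋃ v ∈ S, {n | p n = v} := by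
    intro n hn; simp only [Set.mem_iUnion]; exact ⟨p n, hn, rfl⟩
  have hfin : (⋃ v ∈ S, {n | p n = v}).Finite := by
    have : (S : Set V).Finite := Set.toFinite S
    refine Set.Finite.biUnion this (fun v hv => ?_)
    have := hc v hv
    simpa [InfOcc, Set.not_infinite] using this
  exact h (hfin.subset this)

variable (Ω : V → ℕ)

/-- minimal priority occurring infinitely often -/
noncomputable def minInf (p : ℕ → V) : ℕ := sInf (Ω '' InfOcc p)

/-- `WinsBy b p` : player `b` wins play `p` (player `false` wants the min
infinitely-occurring priority even, player `true` wants it odd). -/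
def WinsBy (b : Bool) (p : ℕ → V) : Prop := (Even (minInf Ω p) ↔ b = false)

lemma winsBy_neg {b : Bool} {p : ℕ → V} (h : ¬ WinsBy Ω b p) : WinsBy Ω (!b) p := by
  cases b <;> simp [WinsBy] at h ⊢ <;> tauto

lemma winsBy_shift {b : Bool} {p : ℕ → V} (t : ℕ) (h : WinsBy Ω b (fun n => p (n + t))) :
    WinsBy Ω b p := by
  unfold WinsBy minInf at *
  rwa [InfOcc_shift] at h

lemma minInf_eq {p : ℕ → V} {m : ℕ} (h1 : ∀ v ∈ InfOcc p, m ≤ Ω v)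
    (h2 : ∃ v ∈ InfOcc p, Ω v = m) : minInf Ω p = m := by
  obtain ⟨v, hv, hm⟩ := h2
  refine le_antisymm (Nat.sInf_le ⟨v, hv, hm⟩) ?_
  refine le_csInf ⟨m, v, hv, hm⟩ ?_
  rintro k ⟨w, hw, rfl⟩
  exact h1 w hw

end Games

section Attractor
variable {V : Type} [Fintype V] [DecidableEq V] (pl : V → Bool) (E : V → V → Prop)

/-- one step of the attractor construction for player `b` inside arena `S` -/
noncomputable def attrStep (b : Bool) (S T : Finset V) : Finset V :=
  T ∪ S.filter (fun v =>
    (pl v = b ∧ ∃ u ∈ T, E v u) ∨ (pl v ≠ b ∧ ∀ u ∈ S, E v u → u ∈ T))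

noncomputable def attrN (b : Bool) (S T : Finset V) : ℕ → Finset V
  | 0 => T
  | n + 1 => attrStep pl E b S (attrN b S T n)

/-- the attractor of `T` for player `b` in arena `S` -/
noncomputable def attr (b : Bool) (S T : Finset V) : Finset V :=
  attrN pl E b S T (S.card + 1)

variable {pl E}

lemma subset_attrStep {b : Bool} {S T : Finset V} : T ⊆ attrStep pl E b S T :=
  Finset.subset_union_left

lemma attrStep_mono {b : Bool} {S : Finset V} {T T' : Finset V} (h : T ⊆ T') :
    attrStep pl E b S T ⊆ attrStep pl E b S T' := by
  unfold attrStep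
  refine Finset.union_subset_union h ?_
  intro v hv
  simp only [Finset.mem_filter] at hv ⊢
  obtain ⟨hvS, hv⟩ := hv
  refine ⟨hvS, ?_⟩
  rcases hv with ⟨h1, u, hu, he⟩ | ⟨h1, h2⟩
  · exact Or.inl ⟨h1, u, h hu, he⟩
  · exact Or.inr ⟨h1, fun u hu he => h (h2 u hu he)⟩


lemma attrN_mono_succ {b : Bool} {S T : Finset V} (n : ℕ) :
    attrN pl E b S T n ⊆ attrN pl E b S T (n + 1) := by
  induction n with
  | zero => exact subset_attrStep
  | succ n ih => exact attrStep_mono ih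

lemma attrN_mono {b : Bool} {S T : Finset V} {m n : ℕ} (h : m ≤ n) :
    attrN pl E b S T m ⊆ attrN pl E b S T n := by
  induction n with
  | zero => simp_all
  | succ n ih =>
    rcases Nat.lt_or_ge m (n+1) with h1 | h1
    · exact (ih (Nat.lt_succ_iff.mp h1)).trans (attrN_mono_succ n)
    · have : m = n + 1 := le_antisymm h h1
      subst this; rfl

lemma attrN_subset {b : Bool} {S T : Finset V} (hT : T ⊆ S) (n : ℕ) :
    attrN pl E b S T n ⊆ S := by
  induction n with
  | zero => exact hT
  | succ n ih =>
    unfold attrN attrStep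
    exact Finset.union_subset ih (Finset.filter_subset _ _)

lemma subset_attr {b : Bool} {S T : Finset V} : T ⊆ attr pl E b S T :=
  attrN_mono (Nat.zero_le _)

lemma attr_subset {b : Bool} {S T : Finset V} (hT : T ⊆ S) : attr pl E b S T ⊆ S :=
  attrN_subset hT _

/-- the attractor is a fixed point of the step operator -/
lemma attr_fixed {b : Bool} {S T : Finset V} (hT : T ⊆ S) :
    attrStep pl E b S (attr pl E b S T) = attr pl E b S T := by
  -- there is some k ≤ S.card with attrN k = attrN (k+1)
  have key : ∃ k ≤ S.card, attrN pl E b S T k = attrN pl E b S T (k + 1) := by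
    by_contra h
    push_neg at h
    have grow : ∀ k ≤ S.card + 1, k ≤ (attrN pl E b S T k).card := by
      intro k hk
      induction k with
      | zero => simp
      | succ k ih =>
        have h1 := h k (Nat.lt_succ_iff.mp hk)
        have h2 : attrN pl E b S T k ⊂ attrN pl E b S T (k+1) :=
          (Finset.ssubset_iff_subset_ne).mpr ⟨attrN_mono_succ k, h1⟩
        have h3 := Finset.card_lt_card h2
        have h4 := ih (by omega)
        omega
    have h1 := grow (S.card + 1) le_rfl
    have h2 := Finset.card_le_card (attrN_subset (pl := pl) (E := E) (b := b) hT (S.card + 1))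
    omega
  obtain ⟨k, hk, heq⟩ := key
  have stab : ∀ m, k ≤ m → attrN pl E b S T m = attrN pl E b S T k := by
    intro m hm
    induction m with
    | zero => have : k = 0 := by omega
              subst this; rfl
    | succ m ih =>
      rcases Nat.lt_or_ge k (m+1) with h1 | h1
      · have := ih (Nat.lt_succ_iff.mp h1)
        show attrStep pl E b S (attrN pl E b S T m) = _
        rw [this]
        conv_rhs => rw [heq]
        rfl
      · exact le_antisymm hm h1 ▸ rfl
  show attrStep pl E b S (attrN pl E b S T (S.card+1)) = attrN pl E b S T (S.card+1)
  have e1 := stab (S.card + 1) (by omega)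
  rw [e1]
  conv_rhs => rw [heq]
  rfl

end Attractor

section AttractorLemmas
variable {V : Type} [Fintype V] [DecidableEq V] (pl : V → Bool) (E : V → V → Prop)

/-- rank of a vertex in the attractor construction -/
noncomputable def arank (b : Bool) (S T : Finset V) (v : V) : ℕ :=
  sInf {n | v ∈ attrN pl E b S T n}

/-- attractor strategy: move to a vertex of smaller rank -/
noncomputable def attrMove (b : Bool) (S T : Finset V) : V → V := fun v =>
  if h : ∃ u, E v u ∧ u ∈ attr pl E b S T ∧
      arank pl E b S T u < arank pl E b S T v then h.choose else v

variable {pl E}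
variable {b : Bool} {S T : Finset V}

lemma arank_mem (hv : v ∈ attr pl E b S T) :
    v ∈ attrN pl E b S T (arank pl E b S T v) :=
  Nat.sInf_mem (⟨S.card + 1, hv⟩ : {n | v ∈ attrN pl E b S T n}.Nonempty)

lemma attrN_stable (hT : T ⊆ S) {n : ℕ} (h : S.card + 1 ≤ n) :
    attrN pl E b S T n = attr pl E b S T := by
  obtain ⟨k, rfl⟩ : ∃ k, n = S.card + 1 + k := ⟨n - (S.card + 1), by omega⟩
  induction k with
  | zero => rfl
  | succ k ih =>
    show attrStep pl E b S (attrN pl E b S T (S.card + 1 + k)) = _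
    rw [ih (by omega), attr_fixed hT]

lemma mem_attr_of_attrN (hT : T ⊆ S) {n : ℕ} (h : v ∈ attrN pl E b S T n) :
    v ∈ attr pl E b S T := by
  rcases Nat.lt_or_ge n (S.card + 1) with h1 | h1
  · exact attrN_mono h1.le h
  · rwa [attrN_stable hT h1] at h

lemma attr_descent (hT : T ⊆ S) (hv : v ∈ attr pl E b S T) (hvT : v ∉ T) :
    (pl v = b → ∃ u, E v u ∧ u ∈ attr pl E b S T ∧
        arank pl E b S T u < arank pl E b S T v) ∧
    (pl v ≠ b → ∀ u ∈ S, E v u → u ∈ attr pl E b S T ∧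
        arank pl E b S T u < arank pl E b S T v) := by
  have hmem : v ∈ attrN pl E b S T (arank pl E b S T v) := arank_mem hv
  have hrpos : arank pl E b S T v ≠ 0 := by
    intro h0
    rw [h0] at hmem
    exact hvT hmem
  obtain ⟨r', hr'⟩ : ∃ r', arank pl E b S T v = r' + 1 :=
    ⟨arank pl E b S T v - 1, by omega⟩
  rw [hr'] at hmem
  rw [hr']
  have hnot : v ∉ attrN pl E b S T r' := by
    intro hmem'
    have h2 : arank pl E b S T v ≤ r' := Nat.sInf_le hmem'
    omega
  have hstep : v ∈ attrStep pl E b S (attrN pl E b S T r') := hmem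
  rw [attrStep, Finset.mem_union] at hstep
  rcases hstep with h1 | h1
  · exact absurd h1 hnot
  rw [Finset.mem_filter] at h1
  obtain ⟨hvS, hcond⟩ := h1
  have hrank_le : ∀ u, u ∈ attrN pl E b S T r' → u ∈ attr pl E b S T ∧
      arank pl E b S T u < r' + 1 := by
    intro u hu
    exact ⟨mem_attr_of_attrN hT hu, lt_of_le_of_lt (Nat.sInf_le hu) (Nat.lt_succ_self r')⟩
  constructor
  · intro hpl
    rcases hcond with ⟨_, u, hu, he⟩ | ⟨hne, _⟩
    · exact ⟨u, he, hrank_le u hu⟩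
    · exact absurd hpl hne
  · intro hpl
    rcases hcond with ⟨heq, _⟩ | ⟨_, hall⟩
    · exact absurd heq hpl
    · intro u huS he
      exact hrank_le u (hall u huS he)

lemma attrMove_spec (hT : T ⊆ S) (hv : v ∈ attr pl E b S T) (hvT : v ∉ T)
    (hpl : pl v = b) :
    E v (attrMove pl E b S T v) ∧ attrMove pl E b S T v ∈ attr pl E b S T ∧
      arank pl E b S T (attrMove pl E b S T v) < arank pl E b S T v := by
  have h := (attr_descent hT hv hvT).1 hpl
  rw [attrMove, dif_pos h]
  exact h.choose_spec

lemma attr_compl (hT : T ⊆ S) (hvS : v ∈ S) (hva : v ∉ attr pl E b S T) :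
    (pl v = b → ∀ u ∈ S, E v u → u ∉ attr pl E b S T) ∧
    (pl v ≠ b → ¬ ∀ u ∈ S, E v u → u ∈ attr pl E b S T) := by
  constructor
  · intro hpl u huS he hu
    apply hva
    rw [← attr_fixed hT]
    rw [attrStep, Finset.mem_union, Finset.mem_filter]
    exact Or.inr ⟨hvS, Or.inl ⟨hpl, u, hu, he⟩⟩
  · intro hpl hall
    apply hva
    rw [← attr_fixed hT]
    rw [attrStep, Finset.mem_union, Finset.mem_filter]
    exact Or.inr ⟨hvS, Or.inr ⟨hpl, hall⟩⟩

/-- from inside the attractor, suitable play reaches the target -/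
lemma attr_reach (hT : T ⊆ S) (p : ℕ → V)
    (hpath : ∀ n, p n ∈ S ∧ E (p n) (p (n + 1)))
    (hstrat : ∀ n, pl (p n) = b → p n ∈ attr pl E b S T → p n ∉ T →
      p (n + 1) ∈ attr pl E b S T ∧
        arank pl E b S T (p (n + 1)) < arank pl E b S T (p n)) :
    ∀ t, p t ∈ attr pl E b S T → ∃ s, t ≤ s ∧ p s ∈ T := by
  have key : ∀ r t, arank pl E b S T (p t) ≤ r → p t ∈ attr pl E b S T →
      ∃ s, t ≤ s ∧ p s ∈ T := by
    intro r
    induction r with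
    | zero =>
      intro t hrank hmem
      refine ⟨t, le_rfl, ?_⟩
      have := arank_mem hmem
      rw [Nat.le_zero.mp hrank] at this
      exact this
    | succ r ih =>
      intro t hrank hmem
      by_cases hT' : p t ∈ T
      · exact ⟨t, le_rfl, hT'⟩
      have hnext : p (t + 1) ∈ attr pl E b S T ∧
          arank pl E b S T (p (t + 1)) < arank pl E b S T (p t) := by
        by_cases hpl : pl (p t) = b
        · exact hstrat t hpl hmem hT'
        · exact (attr_descent hT hmem hT').2 hpl (p (t + 1)) (hpath (t+1)).1 (hpath t).2
      obtain ⟨s, hs, hsT⟩ := ih (t + 1) (by omega) hnext.1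
      exact ⟨s, by omega, hsT⟩
  intro t hmem
  exact key (arank pl E b S T (p t)) t le_rfl hmem

end AttractorLemmas

section Zielonka
variable {V : Type} [Fintype V] [DecidableEq V]
variable (pl : V → Bool) (E : V → V → Prop) (Ω : V → ℕ)

/-- an infinite play inside the arena `S` -/
def IsPath (S : Finset V) (p : ℕ → V) : Prop := ∀ n, p n ∈ S ∧ E (p n) (p (n + 1))

/-- a play consistent with player `b`'s positional strategy `σ` -/
def Consistent (b : Bool) (σ : V → V) (p : ℕ → V) : Prop :=
  ∀ n, pl (p n) = b → p (n + 1) = σ (p n)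

/-- `W` is a region from which `σ` keeps the play (a trap maintained by `σ`) -/
def Trap (b : Bool) (S W : Finset V) (σ : V → V) : Prop :=
  ∀ v ∈ W, (pl v = b → E v (σ v) ∧ σ v ∈ W) ∧
    (pl v ≠ b → ∀ u ∈ S, E v u → u ∈ W)

/-- `σ` wins all consistent plays from `W` for player `b` -/
def WinOn (b : Bool) (S W : Finset V) (σ : V → V) : Prop :=
  ∀ p : ℕ → V, IsPath E S p → p 0 ∈ W → Consistent pl b σ p → WinsBy Ω b p

/-- an arbitrary move staying inside `S` -/
noncomputable def anyMove (S : Finset V) : V → V := fun v =>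
  if h : ∃ u, u ∈ S ∧ E v u then h.choose else v

variable {pl E Ω}

lemma anyMove_spec {S : Finset V} (hS : ∀ v ∈ S, ∃ u ∈ S, E v u) {v : V} (hv : v ∈ S) :
    E v (anyMove E S v) ∧ anyMove E S v ∈ S := by
  obtain ⟨u, hu, he⟩ := hS v hv
  have h : ∃ u, u ∈ S ∧ E v u := ⟨u, hu, he⟩
  rw [anyMove, dif_pos h]
  exact ⟨h.choose_spec.2, h.choose_spec.1⟩

lemma trap_stay {b : Bool} {S W : Finset V} {σ : V → V}
    (htrap : Trap pl E b S W σ) {p : ℕ → V} (hpath : IsPath E S p)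
    (h0 : p 0 ∈ W) (hcons : Consistent pl b σ p) : ∀ n, p n ∈ W := by
  intro n
  induction n with
  | zero => exact h0
  | succ n ih =>
    by_cases hpl : pl (p n) = b
    · rw [hcons n hpl]
      exact ((htrap (p n) ih).1 hpl).2
    · exact (htrap (p n) ih).2 hpl (p (n+1)) (hpath (n+1)).1 (hpath n).2

lemma bool_resolve {b i : Bool} (h : b ≠ i) : b = !i := by
  cases b <;> cases i <;> simp_all

/-- unbounded visits give infinitude -/
lemma infinite_visits {p : ℕ → V} {N : Finset V}
    (h : ∀ t : ℕ, ∃ s, t ≤ s ∧ p s ∈ N) : {n | p n ∈ N}.Infinite := by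
  apply Set.infinite_of_not_bddAbove
  rintro ⟨t, ht⟩
  obtain ⟨s, hs, hsN⟩ := h (t + 1)
  have := ht hsN
  omega

theorem zielonka (pl : V → Bool) (E : V → V → Prop) (Ω : V → ℕ) :
    ∀ S : Finset V, (∀ v ∈ S, ∃ u ∈ S, E v u) →
    ∃ (W : Bool → Finset V) (σ : Bool → V → V),
      W false ∪ W true = S ∧
      (∀ b, W b ⊆ S) ∧
      (∀ b, Trap pl E b S (W b) (σ b)) ∧
      (∀ b, WinOn pl E Ω b S (W b) (σ b)) := by
  intro S
  induction S using Finset.strongInduction with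
  | _ S IH =>
  intro hS
  by_cases hemp : S = ∅
  · subst hemp
    refine ⟨fun _ => ∅, fun _ => id, by simp, by simp, ?_, ?_⟩
    · intro b v hv; simp at hv
    · intro b p _ h0 _; simp at h0
  have hSne : S.Nonempty := Finset.nonempty_iff_ne_empty.mpr hemp
  have hSimg : (S.image Ω).Nonempty := hSne.image Ω
  set pmin := (S.image Ω).min' hSimg with hpmin
  obtain ⟨i, hi⟩ : ∃ i : Bool, (Even pmin ↔ i = false) := by
    by_cases h : Even pmin
    · exact ⟨false, by simp [h]⟩
    · exact ⟨true, by simp [h]⟩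
  set N := S.filter (fun v => Ω v = pmin) with hNdef
  have hNS : N ⊆ S := Finset.filter_subset _ _
  have hNne : N.Nonempty := by
    obtain ⟨v, hvS, hvΩ⟩ := Finset.mem_image.mp (Finset.min'_mem _ hSimg)
    exact ⟨v, Finset.mem_filter.mpr ⟨hvS, hvΩ⟩⟩
  have hpmin_le : ∀ v ∈ S, pmin ≤ Ω v := fun v hv =>
    Finset.min'_le _ _ (Finset.mem_image_of_mem Ω hv)
  set A := attr pl E i S N with hAdef
  have hNA : N ⊆ A := subset_attr
  have hAS : A ⊆ S := attr_subset hNS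
  have hAne : A.Nonempty := hNne.mono hNA
  set S₁ := S \ A with hS₁def
  have hS₁ss : S₁ ⊂ S := Finset.sdiff_ssubset (hAS) hAne
  have hS₁S : S₁ ⊆ S := Finset.sdiff_subset
  -- subgame totality
  have hS₁tot : ∀ v ∈ S₁, ∃ u ∈ S₁, E v u := by
    intro v hv
    have hvS : v ∈ S := hS₁S hv
    have hvA : v ∉ A := (Finset.mem_sdiff.mp hv).2
    by_cases hpl : pl v = i
    · obtain ⟨u, huS, he⟩ := hS v hvS
      have := (attr_compl hNS hvS hvA).1 hpl u huS he
      exact ⟨u, Finset.mem_sdiff.mpr ⟨huS, this⟩, he⟩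
    · have := (attr_compl hNS hvS hvA).2 hpl
      push_neg at this
      obtain ⟨u, huS, he, hu⟩ := this
      exact ⟨u, Finset.mem_sdiff.mpr ⟨huS, hu⟩, he⟩
  obtain ⟨W', σ', hU', hsub', htrap', hwin'⟩ := IH S₁ hS₁ss hS₁tot
  have hU'i : W' i ∪ W' (!i) = S₁ := by
    cases i
    · exact hU'
    · rw [Finset.union_comm]; exact hU'
  by_cases hWo : W' (!i) = ∅
  -- ──────────────── Case 1 : player i wins everywhere ────────────────
  · have hW'i : W' i = S₁ := by
      rw [hWo, Finset.union_empty] at hU'i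
      exact hU'i
    set σi : V → V := fun v =>
      if v ∈ S₁ then σ' i v
      else if v ∈ N then anyMove E S v
      else attrMove pl E i S N v with hσidef
    refine ⟨fun b => if b = i then S else ∅, fun _ => σi, ?_, ?_, ?_, ?_⟩
    · cases i <;> simp
    · intro b
      by_cases hb : b = i <;> simp [hb]
    · -- traps
      intro b
      by_cases hb : i = b
      · subst hb
        simp only [if_pos rfl]
        intro v hv
        have hv : v ∈ S := by simpa using hv
        constructor
        · intro hpl
          by_cases hvS₁ : v ∈ S₁
          · rw [hσidef]
            simp only [if_pos hvS₁]
            have h2 := (htrap' i v (by rw [hW'i]; exact hvS₁)).1 hpl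
            exact ⟨h2.1, hS₁S (by rw [← hW'i]; exact h2.2)⟩
          · have hvA : v ∈ A := by
              by_contra hA
              exact hvS₁ (Finset.mem_sdiff.mpr ⟨hv, hA⟩)
            by_cases hvN : v ∈ N
            · rw [hσidef]
              simp only [if_neg hvS₁, if_pos hvN]
              exact anyMove_spec hS hv
            · rw [hσidef]
              simp only [if_neg hvS₁, if_neg hvN]
              have := attrMove_spec hNS hvA hvN hpl
              exact ⟨this.1, hAS this.2.1⟩
        · intro _ u huS _
          simp [huS]
      · simp only [if_neg (fun h => hb h.symm : ¬ b = i)]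
        intro v hv; simp at hv
    · -- winning
      intro b
      by_cases hb : i = b
      · subst hb
        simp only [if_pos rfl]
        intro p hpath h0 hcons
        by_cases hinf : {n | p n ∈ A}.Infinite
        · -- N is visited infinitely often
          have hreach : ∀ t, p t ∈ A → ∃ s, t ≤ s ∧ p s ∈ N := by
            apply attr_reach hNS p (fun n => ⟨(hpath n).1, (hpath n).2⟩)
            intro n hpl hmemA hmemN
            have hnS₁ : p n ∉ S₁ := fun h => (Finset.mem_sdiff.mp h).2 hmemA
            have := hcons n hpl
            rw [this, hσidef]
            simp only [if_neg hnS₁, if_neg hmemN]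
            have := attrMove_spec hNS hmemA hmemN hpl
            exact ⟨this.2.1, this.2.2⟩
          have hNinf : {n | p n ∈ N}.Infinite := by
            apply infinite_visits
            intro t
            obtain ⟨s, hsA, hs⟩ := hinf.exists_gt t
            obtain ⟨s', hs', hs'N⟩ := hreach s hsA
            exact ⟨s', by omega, hs'N⟩
          obtain ⟨v, hvN, hvInf⟩ := InfOcc_of_infinite_visits (S := {v | v ∈ N}) hNinf
          have hmin : minInf Ω p = pmin := by
            apply minInf_eq
            · intro w hw
              exact hpmin_le w (InfOcc_subset (fun n => (hpath n).1) hw)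
            · exact ⟨v, hvInf, (Finset.mem_filter.mp hvN).2⟩
          rw [WinsBy, hmin]
          exact hi
        · -- the play eventually stays in the subgame
          rw [Set.not_infinite] at hinf
          have hbdd := hinf.bddAbove
          obtain ⟨t, ht⟩ := hbdd
          have hafter : ∀ n, p (n + (t+1)) ∉ A := by
            intro n hn
            have := ht (Set.mem_setOf.mpr hn)
            omega
          apply winsBy_shift Ω (t+1)
          apply hwin' i (fun n => p (n + (t+1)))
          · intro n
            refine ⟨Finset.mem_sdiff.mpr ⟨(hpath _).1, hafter n⟩, ?_⟩
            show E (p (n + (t + 1))) (p (n + 1 + (t + 1)))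
            have he : n + 1 + (t + 1) = n + (t + 1) + 1 := by omega
            rw [he]
            exact (hpath _).2
          · show p (0 + (t+1)) ∈ W' i
            rw [hW'i]
            exact Finset.mem_sdiff.mpr ⟨(hpath _).1, hafter 0⟩
          · intro n hpl
            have hc := hcons (n + (t+1)) hpl
            show p (n + 1 + (t + 1)) = σ' i (p (n + (t + 1)))
            have he : n + 1 + (t + 1) = n + (t + 1) + 1 := by omega
            rw [he, hc, hσidef]
            exact if_pos (Finset.mem_sdiff.mpr ⟨(hpath _).1, hafter n⟩)
      · simp only [if_neg (fun h => hb h.symm : ¬ b = i)]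
        intro p _ h0 _; simp at h0
  -- ──────────────── Case 2 : the opponent wins somewhere ────────────────
  · have hWone : (W' (!i)).Nonempty := Finset.nonempty_iff_ne_empty.mpr hWo
    have hW'S : W' (!i) ⊆ S := (hsub' (!i)).trans hS₁S
    set B := attr pl E (!i) S (W' (!i)) with hBdef
    have hWB : W' (!i) ⊆ B := subset_attr
    have hBS : B ⊆ S := attr_subset hW'S
    have hBne : B.Nonempty := hWone.mono hWB
    set S₂ := S \ B with hS₂def
    have hS₂ss : S₂ ⊂ S := Finset.sdiff_ssubset hBS hBne
    have hS₂S : S₂ ⊆ S := Finset.sdiff_subset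
    have hS₂tot : ∀ v ∈ S₂, ∃ u ∈ S₂, E v u := by
      intro v hv
      have hvS : v ∈ S := hS₂S hv
      have hvB : v ∉ B := (Finset.mem_sdiff.mp hv).2
      by_cases hpl : pl v = !i
      · obtain ⟨u, huS, he⟩ := hS v hvS
        have := (attr_compl hW'S hvS hvB).1 hpl u huS he
        exact ⟨u, Finset.mem_sdiff.mpr ⟨huS, this⟩, he⟩
      · have := (attr_compl hW'S hvS hvB).2 hpl
        push_neg at this
        obtain ⟨u, huS, he, hu⟩ := this
        exact ⟨u, Finset.mem_sdiff.mpr ⟨huS, hu⟩, he⟩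
    obtain ⟨W'', σ'', hU'', hsub'', htrap'', hwin''⟩ := IH S₂ hS₂ss hS₂tot
    have hU''i : W'' i ∪ W'' (!i) = S₂ := by
      cases i
      · exact hU''
      · rw [Finset.union_comm]; exact hU''
    -- the two regions
    set Wo : Finset V := W'' (!i) ∪ B with hWodef
    set σo : V → V := fun v =>
      if v ∈ W'' (!i) then σ'' (!i) v
      else if v ∈ W' (!i) then σ' (!i) v
      else attrMove pl E (!i) S (W' (!i)) v with hσodef
    have hdisj : ∀ v ∈ W'' (!i), v ∉ B := fun v hv =>
      (Finset.mem_sdiff.mp (hsub'' (!i) hv)).2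
    have hdisji : ∀ v ∈ W'' i, v ∉ B := fun v hv =>
      (Finset.mem_sdiff.mp (hsub'' i hv)).2
    -- key fact: from W'(!i), all moves of player i stay in W'(!i)
    have hW'keep : ∀ v ∈ W' (!i), pl v ≠ !i → ∀ u ∈ S, E v u → u ∈ W' (!i) := by
      intro v hv hpl u huS he
      have hvS₁ : v ∈ S₁ := hsub' (!i) hv
      have hvS : v ∈ S := hS₁S hvS₁
      have hvA : v ∉ A := (Finset.mem_sdiff.mp hvS₁).2
      have hpli : pl v = i := by
        have := bool_resolve hpl
        simpa using this
      have huA : u ∉ A := (attr_compl hNS hvS hvA).1 hpli u huS he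
      exact (htrap' (!i) v hv).2 hpl u (Finset.mem_sdiff.mpr ⟨huS, huA⟩) he
    -- trap for player i on W'' i (within full arena S)
    have htrapi : Trap pl E i S (W'' i) (σ'' i) := by
      intro v hv
      constructor
      · intro hpl
        have h1 := (htrap'' i v hv).1 hpl
        exact ⟨h1.1, h1.2⟩
      · intro hpl u huS he
        have hvS₂ : v ∈ S₂ := hsub'' i hv
        have hvS : v ∈ S := hS₂S hvS₂
        have hvB : v ∉ B := (Finset.mem_sdiff.mp hvS₂).2
        have hpl' : pl v = !i := bool_resolve hpl
        have huB : u ∉ B := (attr_compl hW'S hvS hvB).1 hpl' u huS he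
        exact (htrap'' i v hv).2 hpl u (Finset.mem_sdiff.mpr ⟨huS, huB⟩) he
    -- trap for player !i on Wo
    have htrapo : Trap pl E (!i) S Wo σo := by
      intro v hv
      by_cases hv'' : v ∈ W'' (!i)
      · constructor
        · intro hpl
          have h1 := (htrap'' (!i) v hv'').1 hpl
          rw [hσodef]
          simp only [if_pos hv'']
          exact ⟨h1.1, Finset.mem_union_left _ h1.2⟩
        · intro hpl u huS he
          by_cases huB : u ∈ B
          · exact Finset.mem_union_right _ huB
          · have hvS₂ := hsub'' (!i) hv''
            exact Finset.mem_union_left _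
              ((htrap'' (!i) v hv'').2 hpl u (Finset.mem_sdiff.mpr ⟨huS, huB⟩) he)
      · have hvB : v ∈ B := by
          rcases Finset.mem_union.mp hv with h | h
          · exact absurd h hv''
          · exact h
        by_cases hvW' : v ∈ W' (!i)
        · constructor
          · intro hpl
            have h1 := (htrap' (!i) v hvW').1 hpl
            rw [hσodef]
            simp only [if_neg hv'', if_pos hvW']
            exact ⟨h1.1, Finset.mem_union_right _ (hWB h1.2)⟩
          · intro hpl u huS he
            exact Finset.mem_union_right _ (hWB (hW'keep v hvW' hpl u huS he))
        · constructor
          · intro hpl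
            have := attrMove_spec hW'S hvB hvW' hpl
            rw [hσodef]
            simp only [if_neg hv'', if_neg hvW']
            exact ⟨this.1, Finset.mem_union_right _ this.2.1⟩
          · intro hpl u huS he
            have := (attr_descent hW'S hvB hvW').2 hpl u huS he
            exact Finset.mem_union_right _ this.1
    refine ⟨fun b => if b = i then W'' i else Wo,
            fun b => if b = i then σ'' i else σo, ?_, ?_, ?_, ?_⟩
    · -- union
      have : W'' i ∪ Wo = S := by
        rw [hWodef, ← Finset.union_assoc, hU''i, hS₂def]
        exact Finset.sdiff_union_of_subset hBS
      cases i
      · simpa using this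
      · rw [Finset.union_comm] at this
        simpa using this
    · intro b
      by_cases hb : b = i
      · simp only [if_pos hb]
        exact (hsub'' i).trans hS₂S
      · simp only [if_neg hb]
        exact Finset.union_subset ((hsub'' (!i)).trans hS₂S) hBS
    · intro b
      by_cases hb : i = b
      · subst hb; simpa using htrapi
      · have hb' : b = !i := bool_resolve (fun h => hb h.symm)
        subst hb'
        simpa using htrapo
    · intro b
      by_cases hb : i = b
      · subst hb
        simp only [if_pos rfl]
        intro p hpath h0 hcons
        have hstay := trap_stay htrapi hpath h0 hcons
        apply hwin'' i p
        · intro n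
          exact ⟨hsub'' i (hstay n), (hpath n).2⟩
        · exact h0
        · exact hcons
      · have hb' : b = !i := bool_resolve (fun h => hb h.symm)
        subst hb'
        simp only [if_neg (by simp : ¬ (!i) = i)]
        intro p hpath h0 hcons
        have hstay := trap_stay htrapo hpath h0 hcons
        by_cases hW' : ∃ t, p t ∈ W' (!i)
        · obtain ⟨t, ht⟩ := hW'
          have hkeep : ∀ s, p (s + t) ∈ W' (!i) := by
            intro s
            induction s with
            | zero => simpa using ht
            | succ s ih =>
              have he : s + 1 + t = s + t + 1 := by omega
              rw [he]
              by_cases hpl : pl (p (s + t)) = !i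
              · rw [hcons _ hpl, hσodef]
                have hB' : p (s+t) ∈ B := hWB ih
                have : p (s+t) ∉ W'' (!i) := fun h => hdisj _ h hB'
                simp only [if_neg this, if_pos ih]
                exact (htrap' (!i) _ ih).1 hpl |>.2
              · exact hW'keep _ ih hpl _ (hpath _).1 (hpath _).2
          apply winsBy_shift Ω t
          apply hwin' (!i) (fun n => p (n + t))
          · intro n
            refine ⟨hsub' (!i) (hkeep n), ?_⟩
            show E (p (n + t)) (p (n + 1 + t))
            have he : n + 1 + t = n + t + 1 := by omega
            rw [he]
            exact (hpath _).2
          · exact hkeep 0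
          · intro n hpl
            have hc := hcons (n + t) hpl
            show p (n + 1 + t) = σ' (!i) (p (n + t))
            have he : n + 1 + t = n + t + 1 := by omega
            rw [he, hc, hσodef]
            have hB' : p (n+t) ∈ B := hWB (hkeep n)
            have hnot'' : p (n+t) ∉ W'' (!i) := fun h => hdisj _ h hB'
            simp only [if_neg hnot'', if_pos (hkeep n)]
        · push_neg at hW'
          have hnotB : ∀ n, p n ∉ B := by
            intro n hn
            have hreach := attr_reach hW'S p (fun m => ⟨(hpath m).1, (hpath m).2⟩) ?_ n hn
            · obtain ⟨s, _, hsW⟩ := hreach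
              exact hW' s hsW
            · intro m hpl hmB hmW
              have hm'' : p m ∉ W'' (!i) := fun h => hdisj _ h hmB
              have := hcons m hpl
              rw [this, hσodef]
              simp only [if_neg hm'', if_neg hmW]
              have := attrMove_spec hW'S hmB hmW hpl
              exact ⟨this.2.1, this.2.2⟩
          have hin'' : ∀ n, p n ∈ W'' (!i) := by
            intro n
            rcases Finset.mem_union.mp (hstay n) with h | h
            · exact h
            · exact absurd h (hnotB n)
          apply hwin'' (!i) p
          · intro n
            exact ⟨hsub'' (!i) (hin'' n), (hpath n).2⟩
          · exact hin'' 0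
          · intro n hpl
            rw [hcons n hpl, hσodef]
            simp only [if_pos (hin'' n)]

end Zielonka

namespace BL

/-! ### the automaton tracking an ultimately periodic sequence -/

def eRaw (p d n : ℕ) : ℕ := if n ≤ d + p then n else d + 1 + ((n - (d + 1)) % p)

def enc (p d n : ℕ) : Fin (d + p + 1) := ⟨min (eRaw p d n) (d + p), Nat.lt_succ_of_le (Nat.min_le_right _ _)⟩

noncomputable def cval (P : Set ℕ) (p d : ℕ) (j : Fin (d + p + 1)) : Bool := chi P j.val

def stepJ (p d : ℕ) (j : Fin (d + p + 1)) : Fin (d + p + 1) :=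
  if h : j.val < d + p then ⟨j.val + 1, by omega⟩
  else ⟨min (d + 1) (d + p), Nat.lt_succ_of_le (Nat.min_le_right _ _)⟩

lemma eRaw_le {p d : ℕ} (hp : 0 < p) (n : ℕ) : eRaw p d n ≤ d + p := by
  rw [eRaw]
  split
  · omega
  · have := Nat.mod_lt (n - (d + 1)) hp
    omega

lemma enc_val {p d : ℕ} (hp : 0 < p) (n : ℕ) : (enc p d n).val = eRaw p d n := by
  rw [enc]
  simp [min_eq_left (eRaw_le hp n)]

lemma mod_succ_eq {a p r : ℕ} (hp : 0 < p) (hr : a % p = r) :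
    (a + 1) % p = if r + 1 = p then 0 else r + 1 := by
  have h1 : (a + 1) % p = (r + 1 % p) % p := by
    conv_lhs => rw [Nat.add_mod, hr]
  by_cases hp1 : p = 1
  · subst hp1
    have h0 : r = 0 := by omega
    subst h0
    simp [Nat.mod_one]
  · have h2 : 1 % p = 1 := Nat.mod_eq_of_lt (by omega)
    rw [h2] at h1
    have hrp : r < p := hr ▸ Nat.mod_lt a hp
    by_cases h3 : r + 1 = p
    · rw [h1, h3, Nat.mod_self]
      simp
    · rw [h1, Nat.mod_eq_of_lt (by omega), if_neg h3]

lemma stepJ_val (p d : ℕ) (j : Fin (d + p + 1)) :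
    (stepJ p d j).val = if j.val < d + p then j.val + 1 else min (d + 1) (d + p) := by
  rw [stepJ]
  split
  case isTrue h => simp [if_pos h]
  case isFalse h => simp [if_neg h]

lemma enc_succ {p d : ℕ} (hp : 0 < p) (n : ℕ) :
    enc p d (n + 1) = stepJ p d (enc p d n) := by
  apply Fin.ext
  rw [enc_val hp, stepJ_val, enc_val hp]
  by_cases h1 : n + 1 ≤ d + p
  · have e1 : eRaw p d (n + 1) = n + 1 := by rw [eRaw, if_pos h1]
    have e2 : eRaw p d n = n := by rw [eRaw, if_pos (by omega)]
    rw [e1, e2, if_pos (by omega)]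
  · by_cases h2 : n ≤ d + p
    · have hn : n = d + p := by omega
      have e2 : eRaw p d n = d + p := by rw [eRaw, if_pos h2, hn]
      have e1 : eRaw p d (n + 1) = d + 1 := by
        rw [eRaw, if_neg h1]
        have he : n + 1 - (d + 1) = p := by omega
        rw [he, Nat.mod_self]
      rw [e1, e2, if_neg (by omega)]
      omega
    · have hrlt : (n - (d + 1)) % p < p := Nat.mod_lt _ hp
      have e2 : eRaw p d n = d + 1 + ((n - (d + 1)) % p) := by rw [eRaw, if_neg h2]
      have e1 : eRaw p d (n + 1) = d + 1 + ((n - (d + 1) + 1) % p) := by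
        rw [eRaw, if_neg h1]
        have he : n + 1 - (d + 1) = n - (d + 1) + 1 := by omega
        rw [he]
      rw [e1, e2]
      by_cases h3 : (n - (d + 1)) % p + 1 = p
      · rw [if_neg (by omega)]
        have hz : (n - (d + 1) + 1) % p = 0 := by rw [mod_succ_eq hp rfl, if_pos h3]
        omega
      · rw [if_pos (by omega)]
        have hz : (n - (d + 1) + 1) % p = (n - (d + 1)) % p + 1 := by
          rw [mod_succ_eq hp rfl, if_neg h3]
        omega

lemma chi_eq_cval {P : Set ℕ} {p d : ℕ} (hp : 0 < p)
    (hper : ∀ n > d, (n ∈ P ↔ n + p ∈ P)) (n : ℕ) :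
    chi P n = cval P p d (enc p d n) := by
  rw [cval, enc_val hp]
  have key : ∀ n, (n ∈ P ↔ eRaw p d n ∈ P) := by
    intro n
    induction n using Nat.strong_induction_on with
    | _ n ih =>
    rw [eRaw]
    by_cases h1 : n ≤ d + p
    · rw [if_pos h1]
    · rw [if_neg h1]
      have h2 := hper (n - p) (by omega)
      have h3 : n - p + p = n := by omega
      rw [h3] at h2
      have h4 := ih (n - p) (by omega)
      have h5 : (n - p - (d + 1)) % p = (n - (d + 1)) % p := by
        have he : n - (d + 1) = (n - p - (d + 1)) + p := by omega
        rw [he, Nat.add_mod_right]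
      rw [eRaw] at h4
      by_cases h6 : n - p ≤ d + p
      · rw [if_pos h6] at h4
        have h7 : (n - (d+1)) % p = n - p - (d + 1) := by
          rw [← h5]
          exact Nat.mod_eq_of_lt (by omega)
        rw [h7]
        have h8 : d + 1 + (n - p - (d + 1)) = n - p := by omega
        rw [h8]
        exact h2.symm.trans (Iff.rfl)
      · rw [if_neg h6] at h4
        rw [← h5]
        exact h2.symm.trans h4
  simp only [chi]
  exact decide_eq_decide.mpr (key (n := n))

/-! ### foldl helpers -/

lemma foldl_range_succ {α β : Type*} (f : β → α → β) (c : β) (g : ℕ → α) (k : ℕ) :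
    ((List.range (k + 1)).map g).foldl f c = f (((List.range k).map g).foldl f c) (g k) := by
  rw [List.range_succ, List.map_append, List.foldl_append]
  rfl

lemma foldl_eq_of_step {α β : Type*} (f : β → α → β) (c : β) (g : ℕ → α) (s : ℕ → β)
    (h0 : s 0 = c) (hstep : ∀ n, s (n + 1) = f (s n) (g n)) :
    ∀ n, ((List.range n).map g).foldl f c = s n := by
  intro n
  induction n with
  | zero => simpa using h0.symm
  | succ n ih => rw [foldl_range_succ, ih, ← hstep]

end BL

namespace BL

section Game
variable {Q : Type} [Fintype Q]

/-- game vertices: `inl s` – adversary to move; `inr (s, a)` – controller to move -/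
abbrev GV (Q : Type) (m : ℕ) : Type := (Q × Fin m) ⊕ ((Q × Fin m) × Bool)

def gpl {m : ℕ} : GV Q m → Bool := fun v =>
  match v with
  | .inl _ => true
  | .inr _ => false

noncomputable def gE (δ : Q → Bool × Bool × Bool → Q) (P : Set ℕ) (p d : ℕ) :
    GV Q (d + p + 1) → GV Q (d + p + 1) → Prop := fun v u =>
  match v, u with
  | .inl s, .inr t => t.1 = s
  | .inr (s, a), .inl s' =>
      ∃ bb : Bool, s' = (δ s.1 (a, bb, cval P p d s.2), stepJ p d s.2)
  | _, _ => False

noncomputable def gΩ (col : Q → ℕ) (m : ℕ) : GV Q m → ℕ := fun v =>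
  match v with
  | .inl s => col s.1
  | .inr _ => (Finset.univ.sup col) + 1

lemma gE_total (δ : Q → Bool × Bool × Bool → Q) (P : Set ℕ) (p d : ℕ) :
    ∀ v : GV Q (d + p + 1), ∃ u, gE δ P p d v u := by
  intro v
  match v with
  | .inl s => exact ⟨.inr (s, false), rfl⟩
  | .inr (s, a) =>
      exact ⟨.inl (δ s.1 (a, false, cval P p d s.2), stepJ p d s.2), false, rfl⟩

/-- the canonically interleaved play associated to a state sequence `s`
and controller-visible letters `aa` -/
def gplay {m : ℕ} (s : ℕ → Q × Fin m) (aa : ℕ → Bool) : ℕ → GV Q m := fun n =>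
  if n % 2 = 0 then .inl (s (n / 2)) else .inr (s (n / 2), aa (n / 2))

lemma gplay_even {m : ℕ} (s : ℕ → Q × Fin m) (aa : ℕ → Bool) (k : ℕ) :
    gplay s aa (2 * k) = .inl (s k) := by
  rw [gplay]
  simp [Nat.mul_div_cancel_left, Nat.mul_mod_right]

lemma gplay_odd {m : ℕ} (s : ℕ → Q × Fin m) (aa : ℕ → Bool) (k : ℕ) :
    gplay s aa (2 * k + 1) = .inr (s k, aa k) := by
  rw [gplay]
  have h1 : (2 * k + 1) % 2 = 1 := by omega
  have h2 : (2 * k + 1) / 2 = k := by omega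
  rw [h1, h2]
  simp

/-- transfer of infinite occurrence between the play and the state sequence -/
lemma gplay_fiber {m : ℕ} (s : ℕ → Q × Fin m) (aa : ℕ → Bool) (x : Q × Fin m) :
    {n | gplay s aa n = .inl x}.Infinite ↔ {k | s k = x}.Infinite := by
  constructor
  · intro h
    have hsub : {n | gplay s aa n = .inl x} ⊆ (fun k => 2 * k) '' {k | s k = x} := by
      intro n hn
      simp only [Set.mem_setOf_eq] at hn
      rw [gplay] at hn
      by_cases h2 : n % 2 = 0
      · rw [if_pos h2] at hn
        refine ⟨n / 2, by simpa using Sum.inl.inj hn, by show 2 * (n / 2) = n; omega⟩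
      · rw [if_neg h2] at hn
        exact absurd hn (by simp)
    have := h.mono hsub
    exact (this.of_image _)
  · intro h
    have := h.image (Set.injOn_of_injective (mul_right_injective₀ (two_ne_zero) : Function.Injective (fun k => 2 * k)))
    refine this.mono ?_
    rintro n ⟨k, hk, rfl⟩
    simp only [Set.mem_setOf_eq]
    rw [gplay_even]
    exact congrArg _ hk

lemma fst_fiber {m : ℕ} (s : ℕ → Q × Fin m) (q : Q) :
    {n | (s n).1 = q}.Infinite ↔ ∃ j, {k | s k = (q, j)}.Infinite := by
  constructor
  · intro h
    by_contra hc
    push_neg at hc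
    have hsub : {n | (s n).1 = q} ⊆ ⋃ j : Fin m, {k | s k = (q, j)} := by
      intro n hn
      simp only [Set.mem_iUnion, Set.mem_setOf_eq]
      exact ⟨(s n).2, by rw [← hn]⟩
    exact h ((Set.finite_iUnion hc).subset hsub)
  · rintro ⟨j, hj⟩
    refine hj.mono ?_
    intro k hk
    simp only [Set.mem_setOf_eq] at hk ⊢
    rw [hk]

/-- the central correspondence: the minimal priority seen infinitely often in
the interleaved play equals the minimal color seen infinitely often in the
underlying automaton run -/
lemma game_run_inf {m : ℕ} (col : Q → ℕ) (s : ℕ → Q × Fin m) (aa : ℕ → Bool) :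
    minInf (gΩ col m) (gplay s aa) =
      sInf {k | ∃ q, {n | (s n).1 = q}.Infinite ∧ col q = k} := by
  set R := {k | ∃ q, {n | (s n).1 = q}.Infinite ∧ col q = k} with hR
  -- R is nonempty
  obtain ⟨x, hx⟩ := InfOcc_nonempty s
  have hxR : col x.1 ∈ R := by
    refine ⟨x.1, ?_, rfl⟩
    rw [fst_fiber]
    exact ⟨x.2, by simpa [InfOcc] using hx⟩
  -- the game value is bounded by every element of R
  have hle : ∀ k ∈ R, minInf (gΩ col m) (gplay s aa) ≤ k := by
    rintro k ⟨q, hq, rfl⟩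
    obtain ⟨j, hj⟩ := (fst_fiber s q).mp hq
    have : (Sum.inl (q, j) : GV Q m) ∈ InfOcc (gplay s aa) := by
      simp only [InfOcc, Set.mem_setOf_eq]
      exact (gplay_fiber s aa (q, j)).mpr hj
    exact Nat.sInf_le ⟨_, this, rfl⟩
  -- conversely the game minimum is attained at an `inl` vertex
  have hmem : minInf (gΩ col m) (gplay s aa) ∈ (gΩ col m) '' InfOcc (gplay s aa) := by
    apply Nat.sInf_mem
    obtain ⟨v, hv⟩ := InfOcc_nonempty (gplay s aa)
    exact ⟨gΩ col m v, v, hv, rfl⟩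
  obtain ⟨v, hv, hveq⟩ := hmem
  have hvinl : ∃ x', v = Sum.inl x' := by
    match v with
    | .inl x' => exact ⟨x', rfl⟩
    | .inr y =>
      exfalso
      have h1 : minInf (gΩ col m) (gplay s aa) ≤ col x.1 := hle _ hxR
      have h2 : col x.1 ≤ Finset.univ.sup col := Finset.le_sup (Finset.mem_univ x.1)
      have h3 : gΩ col m (Sum.inr y) = (Finset.univ.sup col) + 1 := rfl
      rw [hveq] at h3
      rw [h3] at h1
      omega
  obtain ⟨x', rfl⟩ := hvinl
  have hx'R : col x'.1 ∈ R := by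
    refine ⟨x'.1, ?_, rfl⟩
    rw [fst_fiber]
    refine ⟨x'.2, ?_⟩
    have := (gplay_fiber s aa x').mp (by simpa [InfOcc] using hv)
    simpa using this
  refine le_antisymm (hle _ ?_) ?_
  · exact hR ▸ Nat.sInf_mem ⟨_, hxR⟩
  · have : gΩ col m (Sum.inl x') = col x'.1 := rfl
    rw [← hveq, this]
    exact Nat.sInf_le hx'R

end Game
end BL

namespace BL

section Extract
variable {Q : Type} [Fintype Q] (δ : Q → Bool × Bool × Bool → Q) (P : Set ℕ) (p d : ℕ)

/-- the controller's choice bit extracted from a positional strategy -/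
noncomputable def ctrlBit (σf : GV Q (d + p + 1) → GV Q (d + p + 1))
    (st : Q × Fin (d + p + 1)) (a : Bool) : Bool :=
  if h : ∃ bb : Bool, σf (.inr (st, a)) =
      .inl (δ st.1 (a, bb, cval P p d st.2), stepJ p d st.2) then h.choose else false

lemma ctrlBit_spec {σf : GV Q (d + p + 1) → GV Q (d + p + 1)}
    {st : Q × Fin (d + p + 1)} {a : Bool}
    (h : ∃ bb : Bool, σf (.inr (st, a)) =
      .inl (δ st.1 (a, bb, cval P p d st.2), stepJ p d st.2)) :
    σf (.inr (st, a)) =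
      .inl (δ st.1 (a, ctrlBit δ P p d σf st a, cval P p d st.2), stepJ p d st.2) := by
  rw [ctrlBit, dif_pos h]
  exact h.choose_spec

/-- the adversary's choice bit extracted from a positional strategy -/
noncomputable def advBit (σt : GV Q (d + p + 1) → GV Q (d + p + 1))
    (st : Q × Fin (d + p + 1)) : Bool :=
  if h : ∃ a : Bool, σt (.inl st) = .inr (st, a) then h.choose else false

lemma advBit_spec {σt : GV Q (d + p + 1) → GV Q (d + p + 1)}
    {st : Q × Fin (d + p + 1)}
    (h : ∃ a : Bool, σt (.inl st) = .inr (st, a)) :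
    σt (.inl st) = .inr (st, advBit p d σt st) := by
  rw [advBit, dif_pos h]
  exact h.choose_spec

/-- Moore transition of the controller's extracted machine -/
noncomputable def δM (σf : GV Q (d + p + 1) → GV Q (d + p + 1)) :
    (Q × Fin (d + p + 1)) → Bool × Bool → (Q × Fin (d + p + 1)) := fun st az =>
  (δ st.1 (az.1, ctrlBit δ P p d σf st az.1, cval P p d st.2), stepJ p d st.2)

/-- Mealey transition of the adversary's extracted machine -/
noncomputable def δG (σt : GV Q (d + p + 1) → GV Q (d + p + 1)) :
    (Q × Fin (d + p + 1)) → Bool × Bool → (Q × Fin (d + p + 1)) := fun st yz =>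
  (δ st.1 (advBit p d σt st, yz.1, cval P p d st.2), stepJ p d st.2)

end Extract
end BL

namespace BL

/-- acceptance of a parity automaton expressed through any sequence realizing
its run -/
lemma parity_iff_of_run {Q : Type} [Fintype Q] (δ : Q → Bool × Bool × Bool → Q)
    (q₀ : Q) (col : Q → ℕ) (w : ℕ → Bool × Bool × Bool) (s1 : ℕ → Q)
    (h0 : s1 0 = q₀) (hstep : ∀ n, s1 (n + 1) = δ (s1 n) (w n)) :
    ParityAccepts δ q₀ col w ↔
      Even (sInf {k | ∃ q, {n | s1 n = q}.Infinite ∧ col q = k}) := by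
  rw [ParityAccepts]
  have hrun := foldl_eq_of_step δ q₀ w s1 h0 hstep
  have hsets : {k | ∃ q, {n | ((List.range (n + 1)).map w).foldl δ q₀ = q}.Infinite ∧
      col q = k} = {k | ∃ q, {n | s1 n = q}.Infinite ∧ col q = k} := by
    ext k
    refine exists_congr fun q => and_congr_left' ?_
    have h1 : {n | ((List.range (n + 1)).map w).foldl δ q₀ = q} = {n | s1 (n + 1) = q} := by
      ext n
      rw [Set.mem_setOf_eq, hrun (n + 1)]
      rfl
    rw [h1]
    exact infinite_shift (fun n => s1 n = q) 1
  rw [hsets]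

end BL

theorem ultimately_periodic_finite_state_determinacy' (P : Set ℕ)
    (hP : ∃ p > 0, ∃ d : ℕ, ∀ n > d, (n ∈ P ↔ n + p ∈ P))
    {Q : Type} [Fintype Q] (δ : Q → Bool × Bool × Bool → Q) (q₀ : Q)
    (col : Q → ℕ) :
    (∃ F : (ℕ → Bool) → (ℕ → Bool) → (ℕ → Bool),
      FiniteStateCausal (PairOp F) ∧
      ∀ X : ℕ → Bool,
        ParityAccepts δ q₀ col (fun n => (X n, F X (chi P) n, chi P n))) ∨
    (∃ G : (ℕ → Bool) → (ℕ → Bool) → (ℕ → Bool),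
      FiniteStateStronglyCausal (PairOp G) ∧
      ∀ Y : ℕ → Bool,
        ¬ ParityAccepts δ q₀ col (fun n => (G Y (chi P) n, Y n, chi P n))) := by
  obtain ⟨p, hp, d, hper⟩ := hP
  letI : DecidableEq (BL.GV Q (d + p + 1)) := Classical.decEq _
  have htotS : ∀ v ∈ (Finset.univ : Finset (BL.GV Q (d + p + 1))),
      ∃ u ∈ Finset.univ, BL.gE δ P p d v u := by
    intro v _
    obtain ⟨u, hu⟩ := BL.gE_total δ P p d v
    exact ⟨u, Finset.mem_univ u, hu⟩
  obtain ⟨W, σ, hU, hsubW, htrap, hwin⟩ :=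
    zielonka BL.gpl (BL.gE δ P p d) (BL.gΩ col (d + p + 1)) Finset.univ htotS
  set s₀ : Q × Fin (d + p + 1) := (q₀, BL.enc p d 0) with hs₀
  by_cases hv₀ : (Sum.inl s₀ : BL.GV Q (d + p + 1)) ∈ W false
  -- ───────── the controller wins ─────────
  · left
    set σf := σ false with hσf
    set dM := BL.δM δ P p d σf with hdM
    refine ⟨fun X Z n => BL.ctrlBit δ P p d σf
        (((List.range n).map (fun k => (X k, Z k))).foldl dM s₀) (X n), ?_, ?_⟩
    · exact ⟨Q × Fin (d + p + 1), inferInstance, dM, s₀,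
        (fun st az => BL.ctrlBit δ P p d σf st az.1), fun x n => rfl⟩
    · intro X
      set s : ℕ → Q × Fin (d + p + 1) :=
        fun n => ((List.range n).map (fun k => (X k, chi P k))).foldl dM s₀ with hs
      have hsstep : ∀ n, s (n + 1) = dM (s n) (X n, chi P n) :=
        fun n => BL.foldl_range_succ dM s₀ (fun k => (X k, chi P k)) n
      have henc : ∀ n, (s n).2 = BL.enc p d n := by
        intro n
        induction n with
        | zero => rfl
        | succ n ih =>
          rw [hsstep n]
          show BL.stepJ p d (s n).2 = _
          rw [ih, ← BL.enc_succ hp]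
      set play := BL.gplay s X with hplay
      have hpath : IsPath (BL.gE δ P p d) Finset.univ play := by
        intro n
        refine ⟨Finset.mem_univ _, ?_⟩
        by_cases h2 : n % 2 = 0
        · obtain ⟨k, rfl⟩ : ∃ k, n = 2 * k := ⟨n / 2, by omega⟩
          rw [hplay, BL.gplay_even, BL.gplay_odd]
          exact rfl
        · obtain ⟨k, rfl⟩ : ∃ k, n = 2 * k + 1 := ⟨n / 2, by omega⟩
          rw [hplay, BL.gplay_odd]
          have h3 : 2 * k + 1 + 1 = 2 * (k + 1) := by omega
          rw [h3, BL.gplay_even]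
          exact ⟨BL.ctrlBit δ P p d σf (s k) (X k), hsstep k⟩
      have hstep1 : ∀ k, play (2 * k + 1) ∈ W false →
          play (2 * k + 1 + 1) = σf (play (2 * k + 1)) ∧
            σf (play (2 * k + 1)) ∈ W false := by
        intro k hmem
        have e1 : play (2 * k + 1) = Sum.inr (s k, X k) := by
          rw [hplay]; exact BL.gplay_odd s X k
        have e2 : play (2 * k + 1 + 1) = Sum.inl (s (k + 1)) := by
          rw [hplay]
          have h3 : 2 * k + 1 + 1 = 2 * (k + 1) := by omega
          rw [h3]; exact BL.gplay_even s X (k + 1)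
        have hpl : BL.gpl (play (2 * k + 1)) = false := by rw [e1]; rfl
        have hE := (htrap false _ hmem).1 hpl
        rw [e1] at hE
        obtain ⟨hE1, hE2⟩ := hE
        rw [← hσf] at hE1 hE2
        have hex : ∃ bb : Bool, σf (.inr (s k, X k)) =
            .inl (δ (s k).1 (X k, bb, BL.cval P p d (s k).2), BL.stepJ p d (s k).2) := by
          cases hcase : σf (Sum.inr (s k, X k)) with
          | inl s' =>
            rw [hcase] at hE1
            obtain ⟨bb, hbb⟩ := hE1
            exact ⟨bb, by rw [hbb]⟩
          | inr y =>
            rw [hcase] at hE1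
            exact hE1.elim
        have hb := BL.ctrlBit_spec δ P p d hex
        refine ⟨?_, by rw [e1]; exact hE2⟩
        rw [e1, e2, hb, hsstep k]
        rfl
      have hmemW : ∀ n, play n ∈ W false := by
        intro n
        induction n with
        | zero => exact hv₀
        | succ n ih =>
          by_cases h2 : n % 2 = 0
          · obtain ⟨k, rfl⟩ : ∃ k, n = 2 * k := ⟨n / 2, by omega⟩
            have hpl : BL.gpl (play (2 * k)) ≠ false := by
              rw [hplay, BL.gplay_even]; simp [BL.gpl]
            exact (htrap false _ ih).2 hpl _ (Finset.mem_univ _) (hpath (2 * k)).2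
          · obtain ⟨k, rfl⟩ : ∃ k, n = 2 * k + 1 := ⟨n / 2, by omega⟩
            have h := hstep1 k ih
            rw [h.1]
            exact h.2
      have hcons : Consistent BL.gpl false σf play := by
        intro n hpl
        by_cases h2 : n % 2 = 0
        · obtain ⟨k, rfl⟩ : ∃ k, n = 2 * k := ⟨n / 2, by omega⟩
          rw [hplay, BL.gplay_even] at hpl
          exact absurd hpl (by simp [BL.gpl])
        · obtain ⟨k, rfl⟩ : ∃ k, n = 2 * k + 1 := ⟨n / 2, by omega⟩
          exact (hstep1 k (hmemW _)).1
      have hwb := hwin false play hpath (hmemW 0) hcons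
      have heven : Even (minInf (BL.gΩ col (d + p + 1)) play) := hwb.mpr rfl
      rw [hplay, BL.game_run_inf col s X] at heven
      have hw : ∀ n, (s (n + 1)).1 =
          δ (s n).1 (X n, BL.ctrlBit δ P p d σf (s n) (X n), chi P n) := by
        intro n
        rw [hsstep n]
        show δ (s n).1 (X n, BL.ctrlBit δ P p d σf (s n) (X n), BL.cval P p d (s n).2) = _
        rw [henc n, ← BL.chi_eq_cval hp hper]
      exact (BL.parity_iff_of_run δ q₀ col _ (fun n => (s n).1) rfl hw).mpr heven
  -- ───────── the adversary wins ─────────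
  · right
    have hv₀t : (Sum.inl s₀ : BL.GV Q (d + p + 1)) ∈ W true := by
      have hm : (Sum.inl s₀ : BL.GV Q (d + p + 1)) ∈ W false ∪ W true := by
        rw [hU]; exact Finset.mem_univ _
      rcases Finset.mem_union.mp hm with h | h
      · exact absurd h hv₀
      · exact h
    set σt := σ true with hσt
    set dG := BL.δG δ P p d σt with hdG
    refine ⟨fun Y Z n => BL.advBit p d σt
        (((List.range n).map (fun k => (Y k, Z k))).foldl dG s₀), ?_, ?_⟩
    · exact ⟨Q × Fin (d + p + 1), inferInstance, dG, s₀,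
        (fun st => BL.advBit p d σt st), fun x n => rfl⟩
    · intro Y
      set s : ℕ → Q × Fin (d + p + 1) :=
        fun n => ((List.range n).map (fun k => (Y k, chi P k))).foldl dG s₀ with hs
      have hsstep : ∀ n, s (n + 1) = dG (s n) (Y n, chi P n) :=
        fun n => BL.foldl_range_succ dG s₀ (fun k => (Y k, chi P k)) n
      have henc : ∀ n, (s n).2 = BL.enc p d n := by
        intro n
        induction n with
        | zero => rfl
        | succ n ih =>
          rw [hsstep n]
          show BL.stepJ p d (s n).2 = _
          rw [ih, ← BL.enc_succ hp]
      set aa : ℕ → Bool := fun n => BL.advBit p d σt (s n) with haa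
      set play := BL.gplay s aa with hplay
      have hpath : IsPath (BL.gE δ P p d) Finset.univ play := by
        intro n
        refine ⟨Finset.mem_univ _, ?_⟩
        by_cases h2 : n % 2 = 0
        · obtain ⟨k, rfl⟩ : ∃ k, n = 2 * k := ⟨n / 2, by omega⟩
          rw [hplay, BL.gplay_even, BL.gplay_odd]
          exact rfl
        · obtain ⟨k, rfl⟩ : ∃ k, n = 2 * k + 1 := ⟨n / 2, by omega⟩
          rw [hplay, BL.gplay_odd]
          have h3 : 2 * k + 1 + 1 = 2 * (k + 1) := by omega
          rw [h3, BL.gplay_even]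
          exact ⟨Y k, hsstep k⟩
      have hstep0 : ∀ k, play (2 * k) ∈ W true →
          play (2 * k + 1) = σt (play (2 * k)) ∧ σt (play (2 * k)) ∈ W true := by
        intro k hmem
        have e1 : play (2 * k) = Sum.inl (s k) := by
          rw [hplay]; exact BL.gplay_even s aa k
        have e2 : play (2 * k + 1) = Sum.inr (s k, aa k) := by
          rw [hplay]; exact BL.gplay_odd s aa k
        have hpl : BL.gpl (play (2 * k)) = true := by rw [e1]; rfl
        have hE := (htrap true _ hmem).1 hpl
        rw [e1] at hE
        obtain ⟨hE1, hE2⟩ := hE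
        rw [← hσt] at hE1 hE2
        have hex : ∃ a : Bool, σt (Sum.inl (s k)) = Sum.inr (s k, a) := by
          cases hcase : σt (Sum.inl (s k)) with
          | inl s' =>
            rw [hcase] at hE1
            exact hE1.elim
          | inr y =>
            rw [hcase] at hE1
            exact ⟨y.2, by rw [← hE1]⟩
        have hb := BL.advBit_spec p d hex
        refine ⟨?_, by rw [e1]; exact hE2⟩
        rw [e1, e2, hb]
      have hmemW : ∀ n, play n ∈ W true := by
        intro n
        induction n with
        | zero => exact hv₀t
        | succ n ih =>
          by_cases h2 : n % 2 = 0
          · obtain ⟨k, rfl⟩ : ∃ k, n = 2 * k := ⟨n / 2, by omega⟩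
            have h := hstep0 k ih
            rw [h.1]
            exact h.2
          · obtain ⟨k, rfl⟩ : ∃ k, n = 2 * k + 1 := ⟨n / 2, by omega⟩
            have hpl : BL.gpl (play (2 * k + 1)) ≠ true := by
              rw [hplay, BL.gplay_odd]; simp [BL.gpl]
            exact (htrap true _ ih).2 hpl _ (Finset.mem_univ _) (hpath (2 * k + 1)).2
      have hcons : Consistent BL.gpl true σt play := by
        intro n hpl
        by_cases h2 : n % 2 = 0
        · obtain ⟨k, rfl⟩ : ∃ k, n = 2 * k := ⟨n / 2, by omega⟩
          exact (hstep0 k (hmemW _)).1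
        · obtain ⟨k, rfl⟩ : ∃ k, n = 2 * k + 1 := ⟨n / 2, by omega⟩
          rw [hplay, BL.gplay_odd] at hpl
          exact absurd hpl (by simp [BL.gpl])
      have hwb := hwin true play hpath (hmemW 0) hcons
      have hodd : ¬ Even (minInf (BL.gΩ col (d + p + 1)) play) := by
        intro h
        simpa using hwb.mp h
      rw [hplay, BL.game_run_inf col s aa] at hodd
      have hw : ∀ n, (s (n + 1)).1 =
          δ (s n).1 (BL.advBit p d σt (s n), Y n, chi P n) := by
        intro n
        rw [hsstep n]
        show δ (s n).1 (BL.advBit p d σt (s n), Y n, BL.cval P p d (s n).2) = _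
        rw [henc n, ← BL.chi_eq_cval hp hper]
      intro hacc
      exact hodd ((BL.parity_iff_of_run δ q₀ col _ (fun n => (s n).1) rfl hw).mp hacc)

/-- For an ultimately periodic parameter `P` and any finite deterministic
parity automaton over `{0,1}³` defining `R_A`, either some finite-state causal
operator `F(X, χ_P)` satisfies `(X, F(X, χ_P), χ_P) ∈ R_A` for every `X`, or
some finite-state strongly causal operator `G(Y, χ_P)` satisfies
`(G(Y, χ_P), Y, χ_P) ∉ R_A` for every `Y`. -/
theorem ultimately_periodic_finite_state_determinacy (P : Set ℕ)
    (hP : ∃ p > 0, ∃ d : ℕ, ∀ n > d, (n ∈ P ↔ n + p ∈ P))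
    {Q : Type} [Fintype Q] (δ : Q → Bool × Bool × Bool → Q) (q₀ : Q)
    (col : Q → ℕ) :
    (∃ F : (ℕ → Bool) → (ℕ → Bool) → (ℕ → Bool),
      FiniteStateCausal (PairOp F) ∧
      ∀ X : ℕ → Bool,
        ParityAccepts δ q₀ col (fun n => (X n, F X (chi P) n, chi P n))) ∨
    (∃ G : (ℕ → Bool) → (ℕ → Bool) → (ℕ → Bool),
      FiniteStateStronglyCausal (PairOp G) ∧
      ∀ Y : ℕ → Bool,
        ¬ ParityAccepts δ q₀ col (fun n => (G Y (chi P) n, Y n, chi P n))) := by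
  exact ultimately_periodic_finite_state_determinacy' P hP δ q₀ col
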